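/- The rotational shape function Ny1 satisfies the Kronecker delta property: Ny1(Pj) = 0 for j = 1,2,3; ∂Ny1/∂y(Pj) = 0 for j = 1,2,3; ∂Ny1/∂x(P1) = -1; and ∂Ny1/∂x(P2) = ∂Ny1/∂x(P3) = 0. -/

import Mathlib

noncomputable section

/-- Area coordinate `L1(x,y) = 1 - x/a - y/b`. -/
def L1 (a b : ℝ) (x y : ℝ) : ℝ := 1 - x / a - y / b

/-- Area coordinate `L2(x,y) = x/a - (1/h - 1/b)·y`. -/
def L2 (a h b : ℝ) (x y : ℝ) : ℝ := x / a - (1 / h - 1 / b) * y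

/-- Area coordinate `L3(x,y) = y/h`. -/
def L3 (h : ℝ) (x y : ℝ) : ℝ := y / h

/-- Rotational shape function
`Ny1 = -a·(L1²L2 + ½L1L2L3) - a·(1 - h/b)·(L1²L3 + ½L1L2L3)`. -/
def Ny1 (a h b : ℝ) (x y : ℝ) : ℝ :=
  -a * ((L1 a b x y) ^ 2 * L2 a h b x y + (1 / 2) * L1 a b x y * L2 a h b x y * L3 h x y)
    - a * (1 - h / b) *
      ((L1 a b x y) ^ 2 * L3 h x y + (1 / 2) * L1 a b x y * L2 a h b x y * L3 h x y)

/-- Partial derivative in the first variable. -/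
def pdx (f : ℝ → ℝ → ℝ) (x y : ℝ) : ℝ := deriv (fun t => f t y) x

/-- Partial derivative in the second variable. -/
def pdy (f : ℝ → ℝ → ℝ) (x y : ℝ) : ℝ := deriv (fun t => f x t) y

lemma hasDerivAt_L1x (a b x y : ℝ) : HasDerivAt (fun t => L1 a b t y) (-(1/a)) x := by
  unfold L1
  simpa using (((hasDerivAt_id x).div_const a).const_sub 1).sub_const (y/b)

lemma hasDerivAt_L2x (a h b x y : ℝ) : HasDerivAt (fun t => L2 a h b t y) (1/a) x := by
  unfold L2
  simpa using ((hasDerivAt_id x).div_const a).sub_const ((1/h - 1/b)*y)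

lemma hasDerivAt_L3x (h x y : ℝ) : HasDerivAt (fun t => L3 h t y) 0 x :=
  hasDerivAt_const x (y/h)

lemma hasDerivAt_L1y (a b x y : ℝ) : HasDerivAt (fun t => L1 a b x t) (-(1/b)) y := by
  unfold L1
  have h1 : HasDerivAt (fun t : ℝ => (1 - x/a) - t/b) (-(1/b)) y := by
    simpa using ((hasDerivAt_id y).div_const b).const_sub (1 - x/a)
  exact h1.congr_of_eventuallyEq (by filter_upwards with t; ring)

lemma hasDerivAt_L2y (a h b x y : ℝ) : HasDerivAt (fun t => L2 a h b x t) (-(1/h - 1/b)) y := by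
  unfold L2
  simpa using (((hasDerivAt_id y).const_mul (1/h - 1/b)).const_sub (x/a))

lemma hasDerivAt_L3y (h x y : ℝ) : HasDerivAt (fun t => L3 h x t) (1/h) y := by
  unfold L3
  simpa using (hasDerivAt_id y).div_const h

lemma pdx_Ny1 (a h b x y : ℝ) :
    pdx (Ny1 a h b) x y =
      -a * (2 * L1 a b x y * (-(1/a)) * L2 a h b x y + L1 a b x y ^ 2 * (1/a)
          + (1/2) * (-(1/a)) * L2 a h b x y * L3 h x y
          + (1/2) * L1 a b x y * (1/a) * L3 h x y)
      - a * (1 - h/b) * (2 * L1 a b x y * (-(1/a)) * L3 h x y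
          + (1/2) * (-(1/a)) * L2 a h b x y * L3 h x y
          + (1/2) * L1 a b x y * (1/a) * L3 h x y) := by
  have hL1 := hasDerivAt_L1x a b x y
  have hL2 := hasDerivAt_L2x a h b x y
  have hL3 := hasDerivAt_L3x h x y
  have A := (hL1.pow 2).mul hL2
  have B := ((hL1.const_mul ((1:ℝ)/2)).mul hL2).mul hL3
  have C := (hL1.pow 2).mul hL3
  have H := ((A.add B).const_mul (-a)).sub ((C.add B).const_mul (a*(1-h/b)))
  have h2 := HasDerivAt.deriv (show HasDerivAt (fun t => Ny1 a h b t y) _ x from H)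
  unfold pdx
  rw [h2]; simp only [Pi.pow_apply]; push_cast; ring

lemma pdy_Ny1 (a h b x y : ℝ) :
    pdy (Ny1 a h b) x y =
      -a * (2 * L1 a b x y * (-(1/b)) * L2 a h b x y + L1 a b x y ^ 2 * (-(1/h - 1/b))
          + (1/2) * (-(1/b)) * L2 a h b x y * L3 h x y
          + (1/2) * L1 a b x y * (-(1/h - 1/b)) * L3 h x y
          + (1/2) * L1 a b x y * L2 a h b x y * (1/h))
      - a * (1 - h/b) * (2 * L1 a b x y * (-(1/b)) * L3 h x y + L1 a b x y ^ 2 * (1/h)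
          + (1/2) * (-(1/b)) * L2 a h b x y * L3 h x y
          + (1/2) * L1 a b x y * (-(1/h - 1/b)) * L3 h x y
          + (1/2) * L1 a b x y * L2 a h b x y * (1/h)) := by
  have hL1 := hasDerivAt_L1y a b x y
  have hL2 := hasDerivAt_L2y a h b x y
  have hL3 := hasDerivAt_L3y h x y
  have A := (hL1.pow 2).mul hL2
  have B := ((hL1.const_mul ((1:ℝ)/2)).mul hL2).mul hL3
  have C := (hL1.pow 2).mul hL3
  have H := ((A.add B).const_mul (-a)).sub ((C.add B).const_mul (a*(1-h/b)))
  have h2 := HasDerivAt.deriv (show HasDerivAt (fun t => Ny1 a h b x t) _ y from H)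
  unfold pdy
  rw [h2]; simp only [Pi.pow_apply, Pi.mul_apply]; push_cast; ring

set_option maxHeartbeats 1600000 in
/-- Kronecker delta property of the rotational shape function `Ny1` at the nodes
`P1 = (0,0)`, `P2 = (a,0)`, `P3 = (a(1-h/b), h)`. -/
theorem Ny1_kronecker_delta (a h b : ℝ) (ha : 0 < a) (hh : 0 < h) (hb : h ≤ b) :
    (Ny1 a h b 0 0 = 0 ∧ Ny1 a h b a 0 = 0 ∧ Ny1 a h b (a * (1 - h / b)) h = 0) ∧
    (pdy (Ny1 a h b) 0 0 = 0 ∧ pdy (Ny1 a h b) a 0 = 0 ∧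
      pdy (Ny1 a h b) (a * (1 - h / b)) h = 0) ∧
    pdx (Ny1 a h b) 0 0 = -1 ∧ pdx (Ny1 a h b) a 0 = 0 ∧
      pdx (Ny1 a h b) (a * (1 - h / b)) h = 0 := by
  have ha' : a ≠ 0 := ne_of_gt ha
  have hh' : h ≠ 0 := ne_of_gt hh
  have hb' : b ≠ 0 := ne_of_gt (lt_of_lt_of_le hh hb)
  refine ⟨⟨?_, ?_, ?_⟩, ⟨?_, ?_, ?_⟩, ?_, ?_, ?_⟩
  · simp only [Ny1, L1, L2, L3]; field_simp; ring
  · simp only [Ny1, L1, L2, L3]; field_simp; ring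
  · simp only [Ny1, L1, L2, L3]; field_simp; ring
  · rw [pdy_Ny1]; simp only [L1, L2, L3]; field_simp; ring
  · rw [pdy_Ny1]; simp only [L1, L2, L3]; field_simp; ring
  · rw [pdy_Ny1]; simp only [L1, L2, L3]; field_simp; ring
  · rw [pdx_Ny1]; simp only [L1, L2, L3]; field_simp; ring
  · rw [pdx_Ny1]; simp only [L1, L2, L3]; field_simp; ring
  · rw [pdx_Ny1]; simp only [L1, L2, L3]; field_simp; ring
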